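/- The 'pseudo-translation' of LPODs into extended logic programs fails to preserve preferred answer sets: for the LPOD P = { a × b, p ← not p, a }, P has the unique preferred answer set {b}, but the translated program { a ← not ¬a; b ← ¬a; p ← not p, a } has no consistent answer set. -/

import Mathlib

namespace LPOD

/-- An LPOD rule `C₁ × … × Cₙ ← A₁,…,Aₘ, not B₁,…, not Bₖ`:
`head` is the ordered list of choices, `pos` the positive body literals,
`neg` the default-negated body literals. -/
structure Rule (L : Type) where
  head : List L
  pos  : List L
  neg  : List L

/-- `S` satisfies the body of `r`. -/
def bodySat {L : Type} (S : Set L) (r : Rule L) : Prop :=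
  (∀ a ∈ r.pos, a ∈ S) ∧ (∀ b ∈ r.neg, b ∉ S)

/-- `S` satisfies rule `r` to degree `d` (1-based): degree 1 if the body fails,
otherwise the minimal index of a head choice belonging to `S`. -/
def satDeg {L : Type} (S : Set L) (r : Rule L) (d : ℕ) : Prop :=
  (¬ bodySat S r ∧ d = 1) ∨
  (bodySat S r ∧ 1 ≤ d ∧
    (∃ c, r.head[d - 1]? = some c ∧ c ∈ S) ∧
    (∀ i < d - 1, ∀ c, r.head[i]? = some c → c ∉ S))

/-- The `k`-th option (1-based) of rule `r`:
`Cₖ ← body, not C₁, …, not C_{k−1}`. -/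
def ruleOption {L : Type} (r : Rule L) (k : ℕ) : Rule L :=
  { head := (r.head[k - 1]?).toList
    pos  := r.pos
    neg  := r.neg ++ r.head.take (k - 1) }

/-- `P'` is a split program of `P`: each rule of `P` is replaced by one of its options. -/
def isSplit {L : Type} (P P' : List (Rule L)) : Prop :=
  P'.length = P.length ∧
  ∀ i r, P[(i : ℕ)]? = some r →
    ∃ k, 1 ≤ k ∧ k ≤ r.head.length ∧ P'[i]? = some (ruleOption r k)

/-- `T` is closed under the `S`-reduct of `P` (Gelfond–Lifschitz). -/
def reductClosed {L : Type} (P : List (Rule L)) (S T : Set L) : Prop :=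
  ∀ r ∈ P, (∀ b ∈ r.neg, b ∉ S) → (∀ a ∈ r.pos, a ∈ T) → ∃ c ∈ r.head, c ∈ T

/-- Literals are `(true, a)` (the atom `a`) and `(false, a)` (its strong negation `¬a`). -/
def consistent {A : Type} (S : Set (Bool × A)) : Prop :=
  ¬ ∃ a, (true, a) ∈ S ∧ (false, a) ∈ S

/-- Logically closed: consistent, or the set of all literals. -/
def logClosed {A : Type} (S : Set (Bool × A)) : Prop :=
  consistent S ∨ S = Set.univ

/-- `S` is an answer set of the ordered-disjunction-free program `P`:
a minimal logically closed set closed under the `S`-reduct of `P`. -/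
def answerSet {A : Type} (P : List (Rule (Bool × A))) (S : Set (Bool × A)) : Prop :=
  logClosed S ∧ reductClosed P S S ∧
  ∀ T, T ⊆ S → logClosed T → reductClosed P S T → T = S

/-- `S` is an answer set of the LPOD `P`: a consistent answer set of some split program. -/
def lpodAS {A : Type} (P : List (Rule (Bool × A))) (S : Set (Bool × A)) : Prop :=
  ∃ P', isSplit P P' ∧ answerSet P' S ∧ consistent S

/-- `Sⁱ(P)`: the rules of `P` satisfied by `S` to degree `i`. -/
def degSet {L : Type} (S : Set L) (P : List (Rule L)) (i : ℕ) : Set (Rule L) :=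
  {r | r ∈ P ∧ satDeg S r i}

/-- `S₁ > S₂`: for some degree `i`, `S₂ⁱ(P) ⊊ S₁ⁱ(P)` and `S₁ʲ(P) = S₂ʲ(P)` for all `j < i`. -/
def pref {L : Type} (P : List (Rule L)) (S₁ S₂ : Set L) : Prop :=
  ∃ i, 1 ≤ i ∧ degSet S₂ P i ⊂ degSet S₁ P i ∧
    ∀ j < i, degSet S₁ P j = degSet S₂ P j

/-- Preferred answer sets: answer sets not beaten by any answer set. -/
def preferredAS {A : Type} (P : List (Rule (Bool × A))) (S : Set (Bool × A)) : Prop :=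
  lpodAS P S ∧ ¬ ∃ S', lpodAS P S' ∧ pref P S' S

end LPOD

open LPOD

namespace Stmt13

def a : Bool × Fin 3 := (true, 0)
def na : Bool × Fin 3 := (false, 0)
def b : Bool × Fin 3 := (true, 1)
def p : Bool × Fin 3 := (true, 2)

/-- the LPOD  a × b ;  p ← not p, a -/
def P : List (Rule (Bool × Fin 3)) :=
  [⟨[a, b], [], []⟩, ⟨[p], [a], [p]⟩]

/-- its pseudo-translation  a ← not ¬a ;  b ← ¬a ;  p ← not p, a -/
def T : List (Rule (Bool × Fin 3)) :=
  [⟨[a], [], [na]⟩, ⟨[b], [na], []⟩, ⟨[p], [a], [p]⟩]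

/-- split program 1 -/
def P1 : List (Rule (Bool × Fin 3)) := [⟨[a], [], []⟩, ⟨[p], [a], [p]⟩]
/-- split program 2 -/
def P2 : List (Rule (Bool × Fin 3)) := [⟨[b], [], [a]⟩, ⟨[p], [a], [p]⟩]

lemma cons_empty : consistent (∅ : Set (Bool × Fin 3)) := by
  rintro ⟨x, hx, -⟩; exact hx

lemma cons_a : consistent ({a} : Set (Bool × Fin 3)) := by
  rintro ⟨x, -, h2⟩
  simp [a, Set.mem_singleton_iff, Prod.ext_iff] at h2

lemma cons_b : consistent ({b} : Set (Bool × Fin 3)) := by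
  rintro ⟨x, -, h2⟩
  simp [b, Set.mem_singleton_iff, Prod.ext_iff] at h2

lemma noT : ¬ ∃ S : Set (Bool × Fin 3), answerSet T S ∧ consistent S := by
  rintro ⟨S, ⟨hcl, hred, hmin⟩, hcons⟩
  by_cases hna : na ∈ S
  · have h0 : reductClosed T S ∅ := by
      intro r hr hneg hpos
      simp only [T, List.mem_cons, List.not_mem_nil, or_false] at hr
      rcases hr with h | h | h <;> subst h
      · exact absurd hna (hneg na (by simp))
      · exact absurd (hpos na (by simp)) (by simp)
      · exact absurd (hpos a (by simp)) (by simp)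
    have hS := hmin ∅ (Set.empty_subset S) (Or.inl cons_empty) h0
    rw [← hS] at hna; exact hna
  · have ha : a ∈ S := by
      have := hred ⟨[a], [], [na]⟩ (by simp [T])
        (by intro x hx; simp at hx; subst hx; exact hna)
        (by intro x hx; simp at hx)
      simpa using this
    have hp : p ∈ S := by
      by_contra hp
      have := hred ⟨[p], [a], [p]⟩ (by simp [T])
        (by intro x hx; simp at hx; subst hx; exact hp)
        (by intro x hx; simp at hx; subst hx; exact ha)
      simp at this; exact hp this
    have hS : ({a} : Set (Bool × Fin 3)) = S := by
      apply hmin {a} (by simpa using ha) (Or.inl cons_a)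
      intro r hr hneg hpos
      simp only [T, List.mem_cons, List.not_mem_nil, or_false] at hr
      rcases hr with h | h | h <;> subst h
      · exact ⟨a, by simp⟩
      · have := hpos na (by simp)
        simp [na, a, Set.mem_singleton_iff, Prod.ext_iff] at this
      · exact absurd hp (hneg p (by simp))
    rw [← hS] at hp
    simp [p, a, Set.mem_singleton_iff, Prod.ext_iff] at hp

lemma noP1 : ¬ ∃ S : Set (Bool × Fin 3), answerSet P1 S ∧ consistent S := by
  rintro ⟨S, ⟨hcl, hred, hmin⟩, hcons⟩
  have ha : a ∈ S := by
    have := hred ⟨[a], [], []⟩ (by simp [P1])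
      (by intro x hx; simp at hx) (by intro x hx; simp at hx)
    simpa using this
  have hp : p ∈ S := by
    by_contra hp
    have := hred ⟨[p], [a], [p]⟩ (by simp [P1])
      (by intro x hx; simp at hx; subst hx; exact hp)
      (by intro x hx; simp at hx; subst hx; exact ha)
    simp at this; exact hp this
  have hS : ({a} : Set (Bool × Fin 3)) = S := by
    apply hmin {a} (by simpa using ha) (Or.inl cons_a)
    intro r hr hneg hpos
    simp only [P1, List.mem_cons, List.not_mem_nil, or_false] at hr
    rcases hr with h | h <;> subst h
    · exact ⟨a, by simp⟩
    · exact absurd hp (hneg p (by simp))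
  rw [← hS] at hp
  simp [p, a, Set.mem_singleton_iff, Prod.ext_iff] at hp

lemma P2_unique : ∀ S : Set (Bool × Fin 3), answerSet P2 S → consistent S → S = {b} := by
  rintro S ⟨hcl, hred, hmin⟩ hcons
  by_cases ha : a ∈ S
  · have h0 : reductClosed P2 S ∅ := by
      intro r hr hneg hpos
      simp only [P2, List.mem_cons, List.not_mem_nil, or_false] at hr
      rcases hr with h | h <;> subst h
      · exact absurd ha (hneg a (by simp))
      · exact absurd (hpos a (by simp)) (by simp)
    have hS := hmin ∅ (Set.empty_subset S) (Or.inl cons_empty) h0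
    rw [← hS] at ha; exact absurd ha (Set.notMem_empty a)
  · have hb : b ∈ S := by
      have := hred ⟨[b], [], [a]⟩ (by simp [P2])
        (by intro x hx; simp at hx; subst hx; exact ha)
        (by intro x hx; simp at hx)
      simpa using this
    have hS : ({b} : Set (Bool × Fin 3)) = S := by
      apply hmin {b} (by simpa using hb) (Or.inl cons_b)
      intro r hr hneg hpos
      simp only [P2, List.mem_cons, List.not_mem_nil, or_false] at hr
      rcases hr with h | h <;> subst h
      · exact ⟨b, by simp⟩
      · have := hpos a (by simp)
        simp [a, b, Set.mem_singleton_iff, Prod.ext_iff] at this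
    exact hS.symm

lemma P2_answer : answerSet P2 ({b} : Set (Bool × Fin 3)) := by
  refine ⟨Or.inl cons_b, ?_, ?_⟩
  · intro r hr hneg hpos
    simp only [P2, List.mem_cons, List.not_mem_nil, or_false] at hr
    rcases hr with h | h <;> subst h
    · exact ⟨b, by simp⟩
    · have := hpos a (by simp)
      simp [a, b, Set.mem_singleton_iff, Prod.ext_iff] at this
  · intro Tt hsub hlc hrc
    have hb : b ∈ Tt := by
      have := hrc ⟨[b], [], [a]⟩ (by simp [P2])
        (by intro x hx; simp at hx; subst hx
            simp [a, b, Set.mem_singleton_iff, Prod.ext_iff])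
        (by intro x hx; simp at hx)
      simpa using this
    exact Set.Subset.antisymm hsub (by simpa using hb)

lemma split_P2 : isSplit P P2 := by
  constructor
  · rfl
  · intro i r h
    match i with
    | 0 =>
      simp only [P, List.getElem?_cons_zero] at h
      injection h with h; subst h
      exact ⟨2, by norm_num, by simp, rfl⟩
    | 1 =>
      simp only [P, List.getElem?_cons_succ, List.getElem?_cons_zero] at h
      injection h with h; subst h
      exact ⟨1, le_refl 1, by simp, rfl⟩
    | (n+2) => simp [P] at h

lemma lpod_iff : ∀ S : Set (Bool × Fin 3), lpodAS P S ↔ S = {b} := by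
  intro S
  constructor
  · rintro ⟨P', ⟨hlen, hopts⟩, hans, hcons⟩
    obtain ⟨k, hk1, hk2, hg0⟩ := hopts 0 ⟨[a, b], [], []⟩ rfl
    obtain ⟨k', hk1', hk2', hg1⟩ := hopts 1 ⟨[p], [a], [p]⟩ rfl
    simp only [List.length] at hk2 hk2'
    rcases P' with _ | ⟨x, _ | ⟨y, _ | ⟨z, l⟩⟩⟩ <;> simp [P] at hlen
    simp only [List.getElem?_cons_succ, List.getElem?_cons_zero] at hg0 hg1
    injection hg0 with hg0
    injection hg1 with hg1
    have hk'1 : k' = 1 := le_antisymm hk2' hk1'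
    subst hk'1
    have hy : y = ⟨[p], [a], [p]⟩ := by rw [hg1]; rfl
    interval_cases k
    · have hx : x = ⟨[a], [], []⟩ := by rw [hg0]; rfl
      subst hx; subst hy
      exact absurd ⟨S, hans, hcons⟩ noP1
    · have hx : x = ⟨[b], [], [a]⟩ := by rw [hg0]; rfl
      subst hx; subst hy
      exact P2_unique S hans hcons
  · rintro rfl
    exact ⟨P2, split_P2, P2_answer, cons_b⟩

/-- the pseudo-translation fails: P has the unique preferred
answer set {b}, but the translated program has no consistent answer set. -/
theorem pseudo_translation_fails :
    (∀ S : Set (Bool × Fin 3), preferredAS P S ↔ S = {b}) ∧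
    ¬ ∃ S : Set (Bool × Fin 3), answerSet T S ∧ consistent S := by
  constructor
  · intro S
    constructor
    · rintro ⟨hAS, -⟩
      exact (lpod_iff S).mp hAS
    · rintro rfl
      refine ⟨(lpod_iff _).mpr rfl, ?_⟩
      rintro ⟨S', hS', hpref⟩
      have : S' = {b} := (lpod_iff S').mp hS'
      subst this
      obtain ⟨i, -, hss, -⟩ := hpref
      exact ssubset_irrefl _ hss
  · exact noT

end Stmt13
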